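/- Let Λ ⊂ ℝᵈ be a lattice and V a Λ-rational subspace with dim(V ∩ ({0}×ℝⁿ)) = L₋ and dim V = L₊ + L₋, where d = m + n. With g_t = diag(e^{t/m} I_m, e^{-t/n} I_n), for all t ≥ 0 the covolume of g_t(V ∩ Λ) satisfies log‖g_t V‖ ≤ log‖V‖ + (L₊/m - L₋/n)t + O(1). -/

import Mathlib

open scoped RealInnerProductSpace

/-- The diagonal flow `g_t = diag(e^{t/m} I_m, e^{-t/n} I_n)` acting on `ℝ^{m+n}`. -/
noncomputable def gtFlow (m n : ℕ) (t : ℝ) (x : EuclideanSpace ℝ (Fin (m + n))) :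
    EuclideanSpace ℝ (Fin (m + n)) :=
  WithLp.toLp 2 (fun i : Fin (m + n) => if (i : ℕ) < m then Real.exp (t / m) * x i else Real.exp (-t / n) * x i)

/-- The contracted subspace `𝓛 = {0} × ℝⁿ ⊂ ℝ^{m+n}`. -/
def vertSub (m n : ℕ) : Submodule ℝ (EuclideanSpace ℝ (Fin (m + n))) where
  carrier := {x | ∀ i : Fin (m + n), (i : ℕ) < m → x i = 0}
  add_mem' := by
    intro a b ha hb i hi
    show a i + b i = 0
    rw [ha i hi, hb i hi, add_zero]
  zero_mem' := fun i _ => rfl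
  smul_mem' := by
    intro c a ha i hi
    show c * a i = 0
    rw [ha i hi, mul_zero]

/-- Covolume of the lattice spanned by `v` (square root of the Gram determinant). -/
noncomputable def gramCovol {d q : ℕ} (v : Fin q → EuclideanSpace ℝ (Fin d)) : ℝ :=
  Real.sqrt (Matrix.det (Matrix.of fun i j => (⟪v i, v j⟫ : ℝ)))

/-! ### Auxiliary lemmas on Gram determinants -/

instance wfltFin {N : ℕ} : WellFoundedLT (Fin N) := inferInstance

section Helpers

open InnerProductSpace

variable {E : Type*} [NormedAddCommGroup E] [InnerProductSpace ℝ E]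

/-- Gram determinant of a finite family. -/
noncomputable def gDet {N : ℕ} (x : Fin N → E) : ℝ :=
  (Matrix.of fun i j => (⟪x i, x j⟫ : ℝ)).det

lemma gDet_congr {N : ℕ} (x y : Fin N → E) (A : Matrix (Fin N) (Fin N) ℝ)
    (h : ∀ i, x i = ∑ k, A k i • y k) :
    gDet x = A.det ^ 2 * gDet y := by
  have hM : (Matrix.of fun i j => (⟪x i, x j⟫ : ℝ)) =
      A.transpose * (Matrix.of fun i j => (⟪y i, y j⟫ : ℝ)) * A := by
    ext i j
    simp only [Matrix.mul_apply, Matrix.of_apply, Matrix.transpose_apply]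
    rw [h i, h j, sum_inner]
    simp only [inner_sum, real_inner_smul_left, real_inner_smul_right, Finset.mul_sum,
      Finset.sum_mul]
    rw [Finset.sum_comm]
    refine Finset.sum_congr rfl fun l _ => Finset.sum_congr rfl fun k _ => by ring
  unfold gDet
  rw [hM, Matrix.det_mul, Matrix.det_mul, Matrix.det_transpose]
  ring

lemma inner_gramSchmidt_self {N : ℕ} (x : Fin N → E) (i : Fin N) :
    (⟪gramSchmidt ℝ x i, x i⟫ : ℝ) = ‖gramSchmidt ℝ x i‖ ^ 2 := by
  conv_lhs => rw [gramSchmidt_def'' ℝ x i]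
  rw [inner_add_right, inner_sum, real_inner_self_eq_norm_sq, add_eq_left]
  apply Finset.sum_eq_zero
  intro j hj
  rw [real_inner_smul_right, gramSchmidt_orthogonal ℝ x (Finset.mem_Iio.mp hj).ne', mul_zero]

lemma norm_gramSchmidt_le {N : ℕ} (x : Fin N → E) (i : Fin N) :
    ‖gramSchmidt ℝ x i‖ ≤ ‖x i‖ := by
  have h := inner_gramSchmidt_self x i
  rcases eq_or_lt_of_le (norm_nonneg (gramSchmidt ℝ x i)) with h0 | h0
  · rw [← h0]; exact norm_nonneg _
  · have h2 := real_inner_le_norm (gramSchmidt ℝ x i) (x i)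
    rw [h] at h2
    nlinarith

lemma gDet_eq_prod_gramSchmidt {N : ℕ} (x : Fin N → E) :
    gDet x = ∏ i, ‖gramSchmidt ℝ x i‖ ^ 2 := by
  classical
  set g : Fin N → E := gramSchmidt ℝ x with hg
  set A : Matrix (Fin N) (Fin N) ℝ := Matrix.of (fun k i =>
    if k = i then 1 else if k < i then (⟪g k, x i⟫ : ℝ) / (‖g k‖ : ℝ) ^ 2 else 0) with hA
  have hexp : ∀ i, x i = ∑ k, A k i • g k := by
    intro i
    have hzero : ∀ k ∈ Finset.univ, k ∉ insert i (Finset.Iio i) → A k i • g k = 0 := by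
      intro k _ hk
      simp only [Finset.mem_insert, Finset.mem_Iio] at hk
      push_neg at hk
      have : A k i = 0 := by
        simp only [hA, Matrix.of_apply, if_neg hk.1, if_neg (not_lt.mpr hk.2)]
      rw [this, zero_smul]
    rw [← Finset.sum_subset (Finset.subset_univ (insert i (Finset.Iio i))) hzero]
    rw [Finset.sum_insert (by simp)]
    have hAii : A i i = 1 := by simp [hA]
    have hIio : ∀ k ∈ Finset.Iio i, A k i • g k =
        ((⟪g k, x i⟫ : ℝ) / (‖g k‖ : ℝ) ^ 2) • g k := by
      intro k hk
      have hk' := Finset.mem_Iio.mp hk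
      simp only [hA, Matrix.of_apply, if_neg hk'.ne, if_pos hk']
    rw [hAii, one_smul, Finset.sum_congr rfl hIio]
    exact gramSchmidt_def'' ℝ x i
  have hdetA : A.det = 1 := by
    have htri : A.BlockTriangular id := by
      intro i j hij
      simp only [id] at hij
      simp only [hA, Matrix.of_apply, if_neg (ne_of_gt hij), if_neg (not_lt_of_gt hij)]
    rw [Matrix.det_of_upperTriangular htri]
    simp [hA]
  have hdiag : (Matrix.of fun i j => (⟪g i, g j⟫ : ℝ)) =
      Matrix.diagonal (fun i => ‖g i‖ ^ 2) := by
    ext i j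
    by_cases hij : i = j
    · subst hij; simp [Matrix.diagonal, real_inner_self_eq_norm_sq]
    · simp [Matrix.diagonal_apply_ne _ hij, hg, gramSchmidt_orthogonal ℝ x hij]
  have := gDet_congr x g A hexp
  rw [this, hdetA]
  unfold gDet
  rw [hdiag, Matrix.det_diagonal]
  ring

lemma gDet_nonneg {N : ℕ} (x : Fin N → E) : 0 ≤ gDet x := by
  rw [gDet_eq_prod_gramSchmidt]
  exact Finset.prod_nonneg fun i _ => sq_nonneg _

lemma gDet_le_prod {N : ℕ} (x : Fin N → E) : gDet x ≤ ∏ i, ‖x i‖ ^ 2 := by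
  rw [gDet_eq_prod_gramSchmidt]
  exact Finset.prod_le_prod (fun i _ => sq_nonneg _)
    (fun i _ => pow_le_pow_left₀ (norm_nonneg _) (norm_gramSchmidt_le x i) 2)

lemma gDet_pos {N : ℕ} (x : Fin N → E) (h : LinearIndependent ℝ x) : 0 < gDet x := by
  rw [gDet_eq_prod_gramSchmidt]
  exact Finset.prod_pos fun i _ =>
    pow_pos (norm_pos_iff.mpr (gramSchmidt_ne_zero i h)) 2

end Helpers

/-! ### Auxiliary lemmas on the flow -/

/-- `gtFlow` as a linear map. -/
noncomputable def gtLin (m n : ℕ) (t : ℝ) :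
    EuclideanSpace ℝ (Fin (m + n)) →ₗ[ℝ] EuclideanSpace ℝ (Fin (m + n)) where
  toFun := gtFlow m n t
  map_add' x y := by
    ext i
    by_cases h : (i : ℕ) < m <;>
      simp [gtFlow, h, PiLp.add_apply, mul_add]
  map_smul' c x := by
    ext i
    by_cases h : (i : ℕ) < m <;>
      simp [gtFlow, h, PiLp.smul_apply, smul_eq_mul] <;> ring

lemma gtFlow_injective (m n : ℕ) (t : ℝ) : Function.Injective (gtFlow m n t) := by
  have hinv : ∀ x, gtFlow m n (-t) (gtFlow m n t x) = x := by
    intro x; ext i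
    by_cases h : (i : ℕ) < m
    · simp only [gtFlow, PiLp.toLp_apply, if_pos h, ← mul_assoc, ← Real.exp_add]
      rw [show -t / (m:ℝ) + t / (m:ℝ) = 0 by ring, Real.exp_zero, one_mul]
    · simp only [gtFlow, PiLp.toLp_apply, if_neg h, neg_neg, ← mul_assoc, ← Real.exp_add]
      rw [show t / (n:ℝ) + -t / (n:ℝ) = 0 by ring, Real.exp_zero, one_mul]
  intro x y hxy
  have h2 := congrArg (gtFlow m n (-t)) hxy
  rwa [hinv, hinv] at h2

lemma norm_gtFlow_le (m n : ℕ) (hm : 0 < m) (hn : 0 < n) {t : ℝ} (ht : 0 ≤ t)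
    (x : EuclideanSpace ℝ (Fin (m + n))) :
    ‖gtFlow m n t x‖ ≤ Real.exp (t / m) * ‖x‖ := by
  have hexple : Real.exp (-t / n) ≤ Real.exp (t / m) := by
    apply Real.exp_le_exp.mpr
    have h1 : -t / n ≤ 0 := div_nonpos_iff.mpr (Or.inr ⟨neg_nonpos.mpr ht, Nat.cast_nonneg n⟩)
    have h2 : 0 ≤ t / m := div_nonneg ht (Nat.cast_nonneg m)
    linarith
  have key : ∀ i, ‖gtFlow m n t x i‖ ^ 2 ≤ (Real.exp (t / m)) ^ 2 * ‖x i‖ ^ 2 := by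
    intro i
    by_cases h : (i : ℕ) < m
    · simp only [gtFlow, PiLp.toLp_apply, if_pos h, norm_mul, mul_pow, Real.norm_eq_abs,
        abs_of_pos (Real.exp_pos _)]
      exact le_refl _
    · simp only [gtFlow, PiLp.toLp_apply, if_neg h, norm_mul, mul_pow, Real.norm_eq_abs,
        abs_of_pos (Real.exp_pos _)]
      exact mul_le_mul_of_nonneg_right
        (pow_le_pow_left₀ (Real.exp_pos _).le hexple 2) (sq_nonneg _)
  calc ‖gtFlow m n t x‖ = Real.sqrt (∑ i, ‖gtFlow m n t x i‖ ^ 2) := EuclideanSpace.norm_eq _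
    _ ≤ Real.sqrt (∑ i, (Real.exp (t / m)) ^ 2 * ‖x i‖ ^ 2) :=
        Real.sqrt_le_sqrt (Finset.sum_le_sum fun i _ => key i)
    _ = Real.sqrt ((Real.exp (t / m)) ^ 2 * ∑ i, ‖x i‖ ^ 2) := by rw [Finset.mul_sum]
    _ = Real.exp (t / m) * Real.sqrt (∑ i, ‖x i‖ ^ 2) := by
        rw [Real.sqrt_mul (sq_nonneg _), Real.sqrt_sq (Real.exp_pos _).le]
    _ = Real.exp (t / m) * ‖x‖ := by rw [← EuclideanSpace.norm_eq]

lemma gtFlow_vert (m n : ℕ) (t : ℝ) {x : EuclideanSpace ℝ (Fin (m + n))}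
    (hx : x ∈ vertSub m n) :
    gtFlow m n t x = Real.exp (-t / n) • x := by
  ext i
  by_cases h : (i : ℕ) < m
  · simp [gtFlow, h, hx i h, PiLp.smul_apply, smul_eq_mul]
  · simp [gtFlow, h, PiLp.smul_apply, smul_eq_mul]

lemma norm_gtFlow_vert (m n : ℕ) (t : ℝ) {x : EuclideanSpace ℝ (Fin (m + n))}
    (hx : x ∈ vertSub m n) :
    ‖gtFlow m n t x‖ = Real.exp (-t / n) * ‖x‖ := by
  rw [gtFlow_vert m n t hx, norm_smul, Real.norm_eq_abs, abs_of_pos (Real.exp_pos _)]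

/-- Let `Λ ⊂ ℝᵈ` (`d = m + n`) be a lattice and `V` a `Λ`-rational subspace of dimension
`L₊ + L₋` with `dim(V ∩ ({0}×ℝⁿ)) = L₋` (here `v` is a `ℤ`-basis of `V ∩ Λ`). Then for all
`t ≥ 0`, `log‖g_t V‖ ≤ log‖V‖ + (L₊/m - L₋/n)t + O(1)`. -/
theorem gtFlow_covolume_upper_bound (m n : ℕ) (hm : 0 < m) (hn : 0 < n)
    (b : Module.Basis (Fin (m + n)) ℝ (EuclideanSpace ℝ (Fin (m + n))))
    (Lplus Lminus : ℕ) (v : Fin (Lplus + Lminus) → EuclideanSpace ℝ (Fin (m + n)))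
    (hmem : ∀ i, v i ∈ Submodule.span ℤ (Set.range ⇑b))
    (hind : LinearIndependent ℝ v)
    (hrat : Submodule.span ℤ (Set.range v) =
      Submodule.span ℤ (Set.range ⇑b) ⊓
        (Submodule.span ℝ (Set.range v)).restrictScalars ℤ)
    (hvert : Module.finrank ℝ
      ↥(Submodule.span ℝ (Set.range v) ⊓ vertSub m n) = Lminus) :
    ∃ C : ℝ, ∀ t : ℝ, 0 ≤ t →
      Real.log (gramCovol fun i => gtFlow m n t (v i)) ≤
        Real.log (gramCovol v) +
          ((Lplus : ℝ) / (m : ℝ) - (Lminus : ℝ) / (n : ℝ)) * t + C := by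
  classical
  set V' : Submodule ℝ (EuclideanSpace ℝ (Fin (m + n))) := Submodule.span ℝ (Set.range v)
    with hV'
  set W : Submodule ℝ (EuclideanSpace ℝ (Fin (m + n))) := V' ⊓ vertSub m n with hWdef
  have hWle : W ≤ V' := inf_le_left
  have hfinV : Module.finrank ℝ V' = Lplus + Lminus := by
    rw [hV', finrank_span_eq_card hind, Fintype.card_fin]
  have hsum := Submodule.finrank_add_inf_finrank_orthogonal hWle
  rw [hvert, hfinV] at hsum
  have hrankW' : Module.finrank ℝ ↥(Wᗮ ⊓ V') = Lplus := by omega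
  let bp : Module.Basis (Fin Lplus) ℝ ↥(Wᗮ ⊓ V') := Module.finBasisOfFinrankEq ℝ _ hrankW'
  let bu : Module.Basis (Fin Lminus) ℝ ↥W := Module.finBasisOfFinrankEq ℝ _ hvert
  set pv : Fin Lplus → EuclideanSpace ℝ (Fin (m + n)) := fun i => ((bp i : ↥(Wᗮ ⊓ V')) : _)
    with hpv
  set uv : Fin Lminus → EuclideanSpace ℝ (Fin (m + n)) := fun j => ((bu j : ↥W) : _) with huv
  have hp_ind : LinearIndependent ℝ pv :=
    bp.linearIndependent.map' (Wᗮ ⊓ V').subtype (Submodule.ker_subtype _)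
  have hu_ind : LinearIndependent ℝ uv :=
    bu.linearIndependent.map' W.subtype (Submodule.ker_subtype _)
  have hspan_p : Submodule.span ℝ (Set.range pv) = Wᗮ ⊓ V' := by
    have h1 : Set.range pv = (Wᗮ ⊓ V').subtype '' Set.range bp := by
      rw [← Set.range_comp]; rfl
    rw [h1, ← Submodule.map_span, bp.span_eq, Submodule.map_subtype_top]
  have hspan_u : Submodule.span ℝ (Set.range uv) = W := by
    have h1 : Set.range uv = W.subtype '' Set.range bu := by
      rw [← Set.range_comp]; rfl
    rw [h1, ← Submodule.map_span, bu.span_eq, Submodule.map_subtype_top]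
  have hdisj : Disjoint (Wᗮ ⊓ V') W :=
    ((Submodule.orthogonal_disjoint W).symm).mono_left inf_le_left
  have hsum_ind : LinearIndependent ℝ (Sum.elim pv uv) :=
    hp_ind.sum_type hu_ind (by rw [hspan_p, hspan_u]; exact hdisj)
  set w : Fin (Lplus + Lminus) → EuclideanSpace ℝ (Fin (m + n)) :=
    Sum.elim pv uv ∘ finSumFinEquiv.symm with hw_def
  have hw_ind : LinearIndependent ℝ w := hsum_ind.comp _ finSumFinEquiv.symm.injective
  have hspan_w : Submodule.span ℝ (Set.range w) = V' := by
    have h1 : Set.range w = Set.range pv ∪ Set.range uv := by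
      rw [hw_def, Function.Surjective.range_comp finSumFinEquiv.symm.surjective,
        Set.Sum.elim_range]
    rw [h1, Submodule.span_union, hspan_p, hspan_u, sup_comm]
    exact Submodule.sup_orthogonal_inf_of_hasOrthogonalProjection hWle
  -- coefficients of `v` in terms of `w`
  have hcoef : ∀ i, ∃ c : Fin (Lplus + Lminus) → ℝ, ∑ k, c k • w k = v i := by
    intro i
    rw [← Submodule.mem_span_range_iff_exists_fun ℝ, hspan_w]
    exact Submodule.subset_span ⟨i, rfl⟩
  choose cf hcf using hcoef
  set A : Matrix (Fin (Lplus + Lminus)) (Fin (Lplus + Lminus)) ℝ :=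
    Matrix.of (fun k i => cf i k) with hA
  have hvA : ∀ i, v i = ∑ k, A k i • w k := fun i => (hcf i).symm
  have hdetA : A.det ≠ 0 := by
    intro h0
    obtain ⟨cc, hcc0, hccA⟩ := Matrix.exists_mulVec_eq_zero_iff.mpr h0
    apply hcc0
    funext i
    refine Fintype.linearIndependent_iff.mp hind cc ?_ i
    calc ∑ i, cc i • v i = ∑ i, ∑ k, cc i • (A k i • w k) := by
          simp_rw [hvA, Finset.smul_sum]
      _ = ∑ k, ∑ i, (A k i * cc i) • w k := by
          rw [Finset.sum_comm]
          exact Finset.sum_congr rfl fun k _ => Finset.sum_congr rfl fun i _ => by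
            rw [smul_smul, mul_comm]
      _ = ∑ k, (A.mulVec cc k) • w k := by
          refine Finset.sum_congr rfl fun k _ => ?_
          rw [← Finset.sum_smul]
          rfl
      _ = 0 := by rw [hccA]; simp
  -- basic positivity facts
  have hPp : 0 < ∏ i, ‖pv i‖ :=
    Finset.prod_pos fun i _ => norm_pos_iff.mpr (hp_ind.ne_zero i)
  have hPu : 0 < ∏ j, ‖uv j‖ :=
    Finset.prod_pos fun j _ => norm_pos_iff.mpr (hu_ind.ne_zero j)
  have hgw_pos : 0 < gDet w := gDet_pos w hw_ind
  have huv_vert : ∀ j, uv j ∈ vertSub m n := by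
    intro j
    have hj := (bu j).2
    exact (Submodule.mem_inf.mp hj).2
  -- the constant
  refine ⟨Real.log ((∏ i, ‖pv i‖) * ∏ j, ‖uv j‖) - Real.log (Real.sqrt (gDet w)), ?_⟩
  intro t ht
  set c : ℝ := ((Lplus : ℝ) / (m : ℝ) - (Lminus : ℝ) / (n : ℝ)) with hc
  -- congruence under the flow
  have hvtA : ∀ i, gtFlow m n t (v i) = ∑ k, A k i • gtFlow m n t (w k) := by
    intro i
    have h := congrArg (gtLin m n t) (hvA i)
    rw [map_sum] at h
    simp_rw [map_smul] at h
    exact h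
  have e2 : gDet (fun i => gtFlow m n t (v i)) =
      A.det ^ 2 * gDet (fun k => gtFlow m n t (w k)) :=
    gDet_congr _ _ A hvtA
  have e1 : gDet v = A.det ^ 2 * gDet w := gDet_congr v w A hvA
  -- bound on gDet of the flowed adapted basis
  have hsplit : (∏ k, ‖gtFlow m n t (w k)‖ ^ 2) =
      (∏ i, ‖gtFlow m n t (pv i)‖ ^ 2) * ∏ j, ‖gtFlow m n t (uv j)‖ ^ 2 := by
    rw [← finSumFinEquiv.prod_comp (fun k => ‖gtFlow m n t (w k)‖ ^ 2),
      Fintype.prod_sum_type]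
    congr 1
    · exact Finset.prod_congr rfl fun i _ => by simp [hw_def]
    · exact Finset.prod_congr rfl fun j _ => by simp [hw_def]
  have hbp : (∏ i, ‖gtFlow m n t (pv i)‖ ^ 2) ≤
      (Real.exp (t / m)) ^ (2 * Lplus) * ∏ i, ‖pv i‖ ^ 2 := by
    calc (∏ i, ‖gtFlow m n t (pv i)‖ ^ 2)
        ≤ ∏ i, (Real.exp (t / m)) ^ 2 * ‖pv i‖ ^ 2 := by
          refine Finset.prod_le_prod (fun i _ => sq_nonneg _) fun i _ => ?_
          rw [← mul_pow]
          exact pow_le_pow_left₀ (norm_nonneg _) (norm_gtFlow_le m n hm hn ht (pv i)) 2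
      _ = (Real.exp (t / m)) ^ (2 * Lplus) * ∏ i, ‖pv i‖ ^ 2 := by
          rw [Finset.prod_mul_distrib, Finset.prod_const, Finset.card_univ, Fintype.card_fin,
            ← pow_mul]
  have hbu : (∏ j, ‖gtFlow m n t (uv j)‖ ^ 2) =
      (Real.exp (-t / n)) ^ (2 * Lminus) * ∏ j, ‖uv j‖ ^ 2 := by
    have : ∀ j, ‖gtFlow m n t (uv j)‖ ^ 2 = (Real.exp (-t / n)) ^ 2 * ‖uv j‖ ^ 2 := by
      intro j
      rw [norm_gtFlow_vert m n t (huv_vert j), mul_pow]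
    rw [Finset.prod_congr rfl fun j _ => this j, Finset.prod_mul_distrib, Finset.prod_const,
      Finset.card_univ, Fintype.card_fin, ← pow_mul]
  have hm' : (m : ℝ) ≠ 0 := Nat.cast_ne_zero.mpr hm.ne'
  have hn' : (n : ℝ) ≠ 0 := Nat.cast_ne_zero.mpr hn.ne'
  have hexp_id : (Real.exp (t / m)) ^ (2 * Lplus) * (Real.exp (-t / n)) ^ (2 * Lminus)
      = (Real.exp (c * t)) ^ 2 := by
    rw [← Real.exp_nat_mul, ← Real.exp_nat_mul, ← Real.exp_add,
      ← Real.exp_nat_mul]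
    congr 1
    rw [hc]
    push_cast
    field_simp
    ring
  have hkey : gDet (fun k => gtFlow m n t (w k)) ≤
      (Real.exp (c * t)) ^ 2 * ((∏ i, ‖pv i‖) * ∏ j, ‖uv j‖) ^ 2 := by
    calc gDet (fun k => gtFlow m n t (w k)) ≤ ∏ k, ‖gtFlow m n t (w k)‖ ^ 2 := gDet_le_prod _
      _ = (∏ i, ‖gtFlow m n t (pv i)‖ ^ 2) * ∏ j, ‖gtFlow m n t (uv j)‖ ^ 2 := hsplit
      _ ≤ ((Real.exp (t / m)) ^ (2 * Lplus) * ∏ i, ‖pv i‖ ^ 2) *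
          ((Real.exp (-t / n)) ^ (2 * Lminus) * ∏ j, ‖uv j‖ ^ 2) := by
          rw [hbu]
          exact mul_le_mul_of_nonneg_right hbp
            (mul_nonneg (pow_nonneg (Real.exp_pos _).le _)
              (Finset.prod_nonneg fun j _ => sq_nonneg _))
      _ = (Real.exp (c * t)) ^ 2 * ((∏ i, ‖pv i‖) * ∏ j, ‖uv j‖) ^ 2 := by
          rw [← hexp_id, mul_pow, ← Finset.prod_pow, ← Finset.prod_pow]
          ring
  -- take square roots
  set P : ℝ := (∏ i, ‖pv i‖) * ∏ j, ‖uv j‖ with hP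
  have hPpos : 0 < P := mul_pos hPp hPu
  have hsq : (A.det) ^ 2 * ((Real.exp (c * t)) ^ 2 * P ^ 2)
      = (|A.det| * (Real.exp (c * t) * P)) ^ 2 := by
    rw [show (|A.det| * (Real.exp (c * t) * P)) ^ 2
        = |A.det| ^ 2 * ((Real.exp (c * t)) ^ 2 * P ^ 2) from by ring, sq_abs]
  have hsqrt_le : Real.sqrt (gDet (fun i => gtFlow m n t (v i))) ≤
      |A.det| * (Real.exp (c * t) * P) := by
    have hle2 : gDet (fun i => gtFlow m n t (v i)) ≤
        (|A.det| * (Real.exp (c * t) * P)) ^ 2 := by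
      rw [e2, ← hsq]
      have := mul_le_mul_of_nonneg_left hkey (sq_nonneg A.det)
      calc A.det ^ 2 * gDet (fun k => gtFlow m n t (w k))
          ≤ A.det ^ 2 * ((Real.exp (c * t)) ^ 2 * P ^ 2) := this
        _ = A.det ^ 2 * ((Real.exp (c * t)) ^ 2 * P ^ 2) := rfl
    calc Real.sqrt (gDet (fun i => gtFlow m n t (v i)))
        ≤ Real.sqrt ((|A.det| * (Real.exp (c * t) * P)) ^ 2) := Real.sqrt_le_sqrt hle2
      _ = |A.det| * (Real.exp (c * t) * P) := Real.sqrt_sq (by positivity)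
  -- positivity of the flowed Gram determinant
  have hind_t : LinearIndependent ℝ (fun i => gtFlow m n t (v i)) := by
    have hker : LinearMap.ker (gtLin m n t) = ⊥ :=
      LinearMap.ker_eq_bot.mpr (gtFlow_injective m n t)
    exact hind.map' (gtLin m n t) hker
  have hgvt_pos : 0 < gDet (fun i => gtFlow m n t (v i)) := gDet_pos _ hind_t
  have hLpos : 0 < Real.sqrt (gDet (fun i => gtFlow m n t (v i))) :=
    Real.sqrt_pos.mpr hgvt_pos
  -- covolume identities
  have hcv : gramCovol v = |A.det| * Real.sqrt (gDet w) := by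
    show Real.sqrt (gDet v) = _
    rw [e1, Real.sqrt_mul (sq_nonneg _), Real.sqrt_sq_eq_abs]
  have hcvt : gramCovol (fun i => gtFlow m n t (v i)) =
      Real.sqrt (gDet (fun i => gtFlow m n t (v i))) := rfl
  -- logarithms
  have habs : (0:ℝ) < |A.det| := abs_pos.mpr hdetA
  have hsw : (0:ℝ) < Real.sqrt (gDet w) := Real.sqrt_pos.mpr hgw_pos
  have hlog1 : Real.log (gramCovol v) = Real.log |A.det| + Real.log (Real.sqrt (gDet w)) := by
    rw [hcv, Real.log_mul habs.ne' hsw.ne']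
  have hlog2 : Real.log (|A.det| * (Real.exp (c * t) * P)) =
      Real.log |A.det| + (c * t + Real.log P) := by
    rw [Real.log_mul habs.ne' (by positivity), Real.log_mul (Real.exp_pos _).ne' hPpos.ne',
      Real.log_exp]
  have hfinal : Real.log (gramCovol (fun i => gtFlow m n t (v i))) ≤
      Real.log (|A.det| * (Real.exp (c * t) * P)) := by
    rw [hcvt]
    exact Real.log_le_log hLpos hsqrt_le
  rw [hlog2] at hfinal
  rw [hlog1]
  rw [hc] at hfinal ⊢
  linarith [hfinal]
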